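/- Let (X,d) be a uniquely geodesic, geodesically complete metric space in which geodesics do not split, and let I be a surjective isometry of the space C(X,d) of nonempty convex compact subsets of X endowed with the Hausdorff metric d_H. If there exists p ∈ X such that I({p}) is a singleton, then I({q}) is a singleton for every q ∈ X. -/

import Mathlib

open Metric Set TopologicalSpace

variable {X : Type*}

/-- A geodesic segment from `x` to `y`, parametrized by arclength on `[0, dist x y]`. -/
def IsGeodesicSegment [MetricSpace X] (γ : ℝ → X) (x y : X) : Prop :=
  γ 0 = x ∧ γ (dist x y) = y ∧
    ∀ s ∈ Set.Icc (0 : ℝ) (dist x y), ∀ t ∈ Set.Icc (0 : ℝ) (dist x y),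
      dist (γ s) (γ t) = |s - t|

/-- A metric space is geodesic if any two points are joined by a geodesic segment. -/
def IsGeodesicSpace (X : Type*) [MetricSpace X] : Prop :=
  ∀ x y : X, ∃ γ : ℝ → X, IsGeodesicSegment γ x y

/-- A metric space is uniquely geodesic if any two points are joined by a geodesic
segment, which is moreover unique (as a parametrized segment). -/
def IsUniquelyGeodesic (X : Type*) [MetricSpace X] : Prop :=
  ∀ x y : X, (∃ γ : ℝ → X, IsGeodesicSegment γ x y) ∧
    ∀ γ γ' : ℝ → X, IsGeodesicSegment γ x y → IsGeodesicSegment γ' x y →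
      ∀ t ∈ Set.Icc (0 : ℝ) (dist x y), γ t = γ' t

/-- Geodesic completeness: every geodesic segment extends to a full geodesic line,
i.e. an isometric embedding of `ℝ`. -/
def IsGeodesicallyComplete (X : Type*) [MetricSpace X] : Prop :=
  ∀ (x y : X) (γ : ℝ → X), IsGeodesicSegment γ x y →
    ∃ γ' : ℝ → X, Isometry γ' ∧ γ '' Set.Icc (0 : ℝ) (dist x y) ⊆ Set.range γ'

/-- Geodesics do not split: the image of the bi-infinite geodesic extension of every
nondegenerate geodesic segment is unique. -/
def GeodesicsDoNotSplit (X : Type*) [MetricSpace X] : Prop :=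
  ∀ (x y : X) (γ : ℝ → X), IsGeodesicSegment γ x y → x ≠ y →
    ∀ γ₁ γ₂ : ℝ → X, Isometry γ₁ → Isometry γ₂ →
      γ '' Set.Icc (0 : ℝ) (dist x y) ⊆ Set.range γ₁ →
      γ '' Set.Icc (0 : ℝ) (dist x y) ⊆ Set.range γ₂ →
      Set.range γ₁ = Set.range γ₂

/-- A subset is (geodesically) convex if with any two of its points it contains
the image of every geodesic segment joining them. -/
def IsGeodConvex [MetricSpace X] (C : Set X) : Prop :=
  ∀ a ∈ C, ∀ b ∈ C, ∀ γ : ℝ → X, IsGeodesicSegment γ a b →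
    γ '' Set.Icc (0 : ℝ) (dist a b) ⊆ C

/-- A midpoint map on a metric space: a symmetric map `m` with
`d(m(x,y),x) = d(x,y)/2 = d(m(x,y),y)`. -/
def IsMidpointMap [MetricSpace X] (m : X → X → X) : Prop :=
  (∀ x y, m x y = m y x) ∧
    ∀ x y, dist (m x y) x = dist x y / 2 ∧ dist (m x y) y = dist x y / 2

/-- A convex midpoint map:
`d(m(x₁,y₁), m(x₂,y₂)) ≤ (d(x₁,x₂) + d(y₁,y₂))/2` for all points. -/
def IsConvexMidpointMap [MetricSpace X] (m : X → X → X) : Prop :=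
  IsMidpointMap m ∧
    ∀ x₁ x₂ y₁ y₂ : X, dist (m x₁ y₁) (m x₂ y₂) ≤ (dist x₁ x₂ + dist y₁ y₂) / 2

/-- The space `𝒞(X,d)` of nonempty convex compact subsets of `X`, endowed with the
Hausdorff metric (as a subtype of `NonemptyCompacts X`, whose metric is the
Hausdorff distance). -/
abbrev ConvexCompacts (X : Type*) [MetricSpace X] :=
  {A : NonemptyCompacts X // IsGeodConvex (A : Set X)}

lemma isGeodConvex_singleton [MetricSpace X] (p : X) : IsGeodConvex ({p} : Set X) := by
  rintro a ha b hb γ hγ x ⟨t, ht, rfl⟩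
  rw [Set.mem_singleton_iff] at ha hb
  subst ha; subst hb
  rw [dist_self] at ht
  have : t = 0 := le_antisymm ht.2 ht.1
  subst this
  exact hγ.1

/-- The singleton `{p}` as an element of `𝒞(X,d)`. -/
def singletonCC [MetricSpace X] (p : X) : ConvexCompacts X :=
  ⟨⟨⟨{p}, isCompact_singleton⟩, Set.singleton_nonempty p⟩, isGeodConvex_singleton p⟩

/-- The singleton `{p}` as an element of `𝔉(X,d)`, the space of nonempty compact
subsets of `X` with the Hausdorff metric. -/
def singletonNC [MetricSpace X] (p : X) : NonemptyCompacts X :=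
  ⟨⟨{p}, isCompact_singleton⟩, Set.singleton_nonempty p⟩

/-- The closed `r`-neighborhood `N_r(A) = {x | ∃ a ∈ A, d(a,x) ≤ r}` of a set. -/
def closedNbhd [MetricSpace X] (r : ℝ) (A : Set X) : Set X :=
  {x : X | ∃ a ∈ A, dist a x ≤ r}

/-- A set is `m`-convex if it contains the `m`-midpoint of each pair of its points. -/
def MConvexSet [MetricSpace X] (m : X → X → X) (A : Set X) : Prop :=
  ∀ a ∈ A, ∀ a' ∈ A, m a a' ∈ A

/-- The `m`-convex hull: the intersection of all closed `m`-convex sets containing `A`. -/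
def mConvexHull [MetricSpace X] (m : X → X → X) (A : Set X) : Set X :=
  ⋂₀ {C : Set X | IsClosed C ∧ MConvexSet m C ∧ A ⊆ C}

section Aux

variable [MetricSpace X]

lemma IsGeodesicSegment.dist_left {γ : ℝ → X} {x y : X} (h : IsGeodesicSegment γ x y)
    {t : ℝ} (ht : t ∈ Set.Icc (0 : ℝ) (dist x y)) : dist x (γ t) = t := by
  have h0 := h.2.2 0 ⟨le_rfl, dist_nonneg⟩ t ht
  rw [h.1] at h0
  rw [h0, abs_sub_comm, sub_zero, abs_of_nonneg ht.1]

lemma IsGeodesicSegment.dist_right {γ : ℝ → X} {x y : X} (h : IsGeodesicSegment γ x y)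
    {t : ℝ} (ht : t ∈ Set.Icc (0 : ℝ) (dist x y)) : dist (γ t) y = dist x y - t := by
  have h0 := h.2.2 t ht (dist x y) ⟨dist_nonneg, le_rfl⟩
  rw [h.2.1] at h0
  rw [h0, abs_of_nonpos (by linarith [ht.2])]
  ring

/-- Concatenation: if `m` is metrically between `a` and `b`, then any geodesic from
`a` to `b` passes through `m` at parameter `dist a m`. -/
lemma geod_concat (hug : IsUniquelyGeodesic X) {a m b : X}
    (h : dist a m + dist m b = dist a b) {γ : ℝ → X} (hγ : IsGeodesicSegment γ a b) :
    γ (dist a m) = m := by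
  classical
  obtain ⟨δ₁, hδ₁⟩ := (hug a m).1
  obtain ⟨δ₂, hδ₂⟩ := (hug m b).1
  set α := dist a m with hαdef
  set β := dist m b with hβdef
  have hα : (0:ℝ) ≤ α := dist_nonneg
  have hβ : (0:ℝ) ≤ β := dist_nonneg
  set δ : ℝ → X := fun t => if t ≤ α then δ₁ t else δ₂ (t - α) with hδdef
  have hδα : δ α = m := by simp only [hδdef, if_pos le_rfl]; exact hδ₁.2.1
  have hv1 : ∀ t, 0 ≤ t → t ≤ α → dist a (δ t) = t ∧ dist (δ t) m = α - t := by
    intro t h0 h1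
    simp only [hδdef, if_pos h1]
    exact ⟨hδ₁.dist_left ⟨h0, h1⟩, hδ₁.dist_right ⟨h0, h1⟩⟩
  have hv2 : ∀ t, α ≤ t → t ≤ α + β → dist m (δ t) = t - α ∧ dist (δ t) b = α + β - t := by
    intro t h0 h1
    by_cases hc : t ≤ α
    · have : t = α := le_antisymm hc h0
      subst this
      rw [hδα]
      simp [hβdef]
    · simp only [hδdef, if_neg hc]
      have hm : t - α ∈ Set.Icc (0:ℝ) (dist m b) := ⟨by linarith, by rw [← hβdef]; linarith⟩
      refine ⟨hδ₂.dist_left hm, ?_⟩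
      have := hδ₂.dist_right hm
      rw [← hβdef] at this
      rw [this]; ring
  have main : ∀ s ∈ Set.Icc (0:ℝ) (dist a b), ∀ t ∈ Set.Icc (0:ℝ) (dist a b), s ≤ t →
      dist (δ s) (δ t) = t - s := by
    intro s hs t ht hst
    have hsab : s ≤ α + β := by rw [h]; exact hs.2
    have htab : t ≤ α + β := by rw [h]; exact ht.2
    rcases le_or_gt t α with h1 | h1
    · have := hδ₁.2.2 s ⟨hs.1, hst.trans h1⟩ t ⟨ht.1, h1⟩
      simp only [hδdef, if_pos (hst.trans h1), if_pos h1]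
      rw [this, abs_of_nonpos (by linarith)]; ring
    · rcases le_or_gt s α with h2 | h2
      · -- s ≤ α < t
        have hs' := hv1 s hs.1 h2
        have ht' := hv2 t h1.le htab
        have hub : dist (δ s) (δ t) ≤ t - s := by
          calc dist (δ s) (δ t) ≤ dist (δ s) m + dist m (δ t) := dist_triangle _ _ _
            _ = (α - s) + (t - α) := by rw [hs'.2, ht'.1]
            _ = t - s := by ring
        have hlb : α + β ≤ s + dist (δ s) (δ t) + (α + β - t) := by
          calc α + β = dist a b := h
            _ ≤ dist a (δ s) + dist (δ s) (δ t) + dist (δ t) b :=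
                dist_triangle4 a (δ s) (δ t) b
            _ = s + dist (δ s) (δ t) + (α + β - t) := by rw [hs'.1, ht'.2]
        linarith
      · -- α < s ≤ t
        simp only [hδdef, if_neg (not_le.2 h2), if_neg (not_le.2 (h2.trans_le hst))]
        have := hδ₂.2.2 (s - α) ⟨by linarith, by rw [← hβdef]; linarith⟩
          (t - α) ⟨by linarith, by rw [← hβdef]; linarith⟩
        rw [this, abs_of_nonpos (by linarith)]; ring
  have hδseg : IsGeodesicSegment δ a b := by
    refine ⟨?_, ?_, ?_⟩
    · simp only [hδdef, if_pos hα]; exact hδ₁.1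
    · by_cases hc : dist a b ≤ α
      · have hβ0 : β = 0 := le_antisymm (by linarith) hβ
        have hmb : m = b := by rw [← dist_eq_zero, ← hβdef]; exact hβ0
        have : dist a b = α := le_antisymm hc (by rw [← h, hβ0]; simp)
        rw [this, hδα, hmb]
      · simp only [hδdef, if_neg hc]
        have : dist a b - α = dist m b := by rw [← h]; ring
        rw [this]; exact hδ₂.2.1
    · intro s hs t ht
      rcases le_total s t with hst | hst
      · rw [main s hs t ht hst, abs_of_nonpos (by linarith)]; ring
      · rw [dist_comm, main t ht s hs hst, abs_of_nonneg (by linarith)]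
  have heq := (hug a b).2 γ δ hγ hδseg α ⟨hα, by rw [← h]; linarith⟩
  rw [heq, hδα]

/-- Between a point and another, at a given distance, the point is unique. -/
lemma between_unique (hug : IsUniquelyGeodesic X) {x z b b' : X}
    (hb : dist x b + dist b z = dist x z) (hb' : dist x b' + dist b' z = dist x z)
    (heq : dist x b = dist x b') : b = b' := by
  obtain ⟨γ, hγ⟩ := (hug x z).1
  have h1 := geod_concat hug hb hγ
  have h2 := geod_concat hug hb' hγ
  rw [← h1, ← h2, heq]

/-- Pinning lemma: two points lying beyond `x` (as seen from `a`) at equal distance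
from `x` coincide. -/
lemma lineP (hug : IsUniquelyGeodesic X) (hgc : IsGeodesicallyComplete X)
    (hns : GeodesicsDoNotSplit X) {a x y₁ y₂ : X} (hax : a ≠ x)
    (h1 : dist a x + dist x y₁ = dist a y₁) (h2 : dist a x + dist x y₂ = dist a y₂)
    (hb : dist x y₁ = dist x y₂) : y₁ = y₂ := by
  by_cases hβ0 : dist x y₁ = 0
  · have e1 : x = y₁ := by rw [← dist_eq_zero]; exact hβ0
    have e2 : x = y₂ := by rw [← dist_eq_zero, ← hb]; exact hβ0
    rw [← e1, ← e2]
  obtain ⟨γ₁, hγ₁⟩ := (hug a y₁).1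
  obtain ⟨γ₂, hγ₂⟩ := (hug a y₂).1
  have hx1 : γ₁ (dist a x) = x := geod_concat hug h1 hγ₁
  have hx2 : γ₂ (dist a x) = x := geod_concat hug h2 hγ₂
  obtain ⟨ℓ₁, hℓ₁iso, hℓ₁sub⟩ := hgc a y₁ γ₁ hγ₁
  obtain ⟨ℓ₂, hℓ₂iso, hℓ₂sub⟩ := hgc a y₂ γ₂ hγ₂
  obtain ⟨σ, hσ⟩ := (hug a x).1
  have hax' : (0:ℝ) < dist a x := dist_pos.2 hax
  have hsub : ∀ (γ : ℝ → X) (y : X), IsGeodesicSegment γ a y →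
      dist a x + dist x y = dist a y →
      σ '' Set.Icc (0:ℝ) (dist a x) ⊆ γ '' Set.Icc (0:ℝ) (dist a y) := by
    intro γ y hγ hadd
    have hxy : (0:ℝ) ≤ dist x y := dist_nonneg
    have hres : IsGeodesicSegment γ a x := by
      refine ⟨hγ.1, geod_concat hug hadd hγ, ?_⟩
      intro s hs t ht
      exact hγ.2.2 s ⟨hs.1, hs.2.trans (by linarith)⟩ t ⟨ht.1, ht.2.trans (by linarith)⟩
    rintro z ⟨t, ht, rfl⟩
    exact ⟨t, ⟨ht.1, ht.2.trans (by linarith)⟩, ((hug a x).2 σ γ hσ hres t ht).symm⟩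
  have hr : Set.range ℓ₁ = Set.range ℓ₂ :=
    hns a x σ hσ hax ℓ₁ ℓ₂ hℓ₁iso hℓ₂iso
      ((hsub γ₁ y₁ hγ₁ h1).trans hℓ₁sub) ((hsub γ₂ y₂ hγ₂ h2).trans hℓ₂sub)
  have hd1 : (0:ℝ) ≤ dist a y₁ := dist_nonneg
  have hd2 : (0:ℝ) ≤ dist a y₂ := dist_nonneg
  have hxy1 : (0:ℝ) ≤ dist x y₁ := dist_nonneg
  have ha_mem : a ∈ Set.range ℓ₁ := hℓ₁sub ⟨0, ⟨le_rfl, hd1⟩, hγ₁.1⟩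
  have hx_mem : x ∈ Set.range ℓ₁ := hℓ₁sub ⟨dist a x, ⟨dist_nonneg, by linarith⟩, hx1⟩
  have hy1_mem : y₁ ∈ Set.range ℓ₁ := hℓ₁sub ⟨dist a y₁, ⟨hd1, le_rfl⟩, hγ₁.2.1⟩
  have hy2_mem : y₂ ∈ Set.range ℓ₁ := by
    rw [hr]
    exact hℓ₂sub ⟨dist a y₂, ⟨hd2, le_rfl⟩, hγ₂.2.1⟩
  obtain ⟨ta, hta⟩ := ha_mem
  obtain ⟨tx, htx⟩ := hx_mem
  obtain ⟨t1, ht1⟩ := hy1_mem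
  obtain ⟨t2, ht2⟩ := hy2_mem
  have hdist : ∀ s t : ℝ, dist (ℓ₁ s) (ℓ₁ t) = |s - t| := by
    intro s t; rw [hℓ₁iso.dist_eq, Real.dist_eq]
  have e1 : |ta - tx| = dist a x := by rw [← hdist, hta, htx]
  have e2 : |tx - t1| = dist x y₁ := by rw [← hdist, htx, ht1]
  have e3 : |ta - t1| = dist a y₁ := by rw [← hdist, hta, ht1]
  have e4 : |tx - t2| = dist x y₂ := by rw [← hdist, htx, ht2]
  have e5 : |ta - t2| = dist a y₂ := by rw [← hdist, hta, ht2]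
  have hβpos : (0:ℝ) < dist x y₁ := lt_of_le_of_ne hxy1 (Ne.symm hβ0)
  have ht12 : t1 = t2 := by
    rw [← h1] at e3
    rw [← h2, ← hb] at e5
    rw [← hb] at e4
    rcases abs_cases (ta - tx) with ⟨f1, g1⟩ | ⟨f1, g1⟩ <;>
      rcases abs_cases (tx - t1) with ⟨f2, g2⟩ | ⟨f2, g2⟩ <;>
        rcases abs_cases (ta - t1) with ⟨f3, g3⟩ | ⟨f3, g3⟩ <;>
          rcases abs_cases (tx - t2) with ⟨f4, g4⟩ | ⟨f4, g4⟩ <;>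
            rcases abs_cases (ta - t2) with ⟨f5, g5⟩ | ⟨f5, g5⟩ <;>
              linarith [e1, e2, e3, e4, e5]
  rw [← ht1, ← ht2, ht12]

/-- Existence of a full geodesic line through two points. -/
lemma exists_line (hug : IsUniquelyGeodesic X) (hgc : IsGeodesicallyComplete X) (p q : X) :
    ∃ ψ : ℝ → X, Isometry ψ ∧ ψ 0 = p ∧ ψ (dist p q) = q := by
  obtain ⟨γ, hγ⟩ := (hug p q).1
  obtain ⟨ℓ, hℓiso, hsub⟩ := hgc p q γ hγ
  obtain ⟨t₀, ht₀⟩ := hsub ⟨0, ⟨le_rfl, dist_nonneg⟩, hγ.1⟩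
  obtain ⟨t₁, ht₁⟩ := hsub ⟨dist p q, ⟨dist_nonneg, le_rfl⟩, hγ.2.1⟩
  have hd : dist p q = |t₀ - t₁| := by rw [← ht₀, ← ht₁, hℓiso.dist_eq, Real.dist_eq]
  rcases le_total t₀ t₁ with hc | hc
  · refine ⟨fun t => ℓ (t₀ + t), ?_, by simpa using ht₀, ?_⟩
    · apply Isometry.of_dist_eq
      intro s t
      rw [hℓiso.dist_eq, Real.dist_eq, Real.dist_eq]
      congr 1; ring
    · have : t₀ + dist p q = t₁ := by rw [hd, abs_of_nonpos (by linarith)]; ring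
      show ℓ (t₀ + dist p q) = q
      rw [this, ht₁]
  · refine ⟨fun t => ℓ (t₀ - t), ?_, by simpa using ht₀, ?_⟩
    · apply Isometry.of_dist_eq
      intro s t
      rw [hℓiso.dist_eq, Real.dist_eq, Real.dist_eq]
      rw [← abs_neg]; congr 1; ring
    · have : t₀ - dist p q = t₁ := by rw [hd, abs_of_nonneg (by linarith)]; ring
      show ℓ (t₀ - dist p q) = q
      rw [this, ht₁]

/-- The image of a real interval under an isometric line is geodesically convex. -/
lemma seg_convex (hug : IsUniquelyGeodesic X) {φ : ℝ → X} (hφ : Isometry φ) (c e : ℝ) :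
    IsGeodConvex (φ '' Set.Icc c e) := by
  have hφd : ∀ s t : ℝ, dist (φ s) (φ t) = |s - t| := by
    intro s t; rw [hφ.dist_eq, Real.dist_eq]
  rintro a ⟨r, hr, rfl⟩ b ⟨r', hr', rfl⟩ γ hγ z ⟨t, ht, rfl⟩
  rcases le_total r r' with hc | hc
  · have hdrr : dist (φ r) (φ r') = r' - r := by rw [hφd, abs_of_nonpos (by linarith)]; ring
    have hseg : IsGeodesicSegment (fun t => φ (r + t)) (φ r) (φ r') := by
      refine ⟨by simp, ?_, ?_⟩
      · rw [hdrr]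
        show φ (r + (r' - r)) = φ r'
        congr 1
        ring
      · intro s _ u _
        show dist (φ (r + s)) (φ (r + u)) = |s - u|
        rw [hφd, show r + s - (r + u) = s - u by ring]
    have := (hug _ _).2 γ _ hγ hseg t ht
    rw [this]
    rw [hdrr] at ht
    exact ⟨r + t, ⟨by linarith [ht.1, hr.1], by linarith [ht.2, hr'.2]⟩, rfl⟩
  · have hdrr : dist (φ r) (φ r') = r - r' := by rw [hφd, abs_of_nonneg (by linarith)]
    have hseg : IsGeodesicSegment (fun t => φ (r - t)) (φ r) (φ r') := by
      refine ⟨by simp, ?_, ?_⟩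
      · rw [hdrr]
        show φ (r - (r - r')) = φ r'
        congr 1
        ring
      · intro s _ u _
        show dist (φ (r - s)) (φ (r - u)) = |s - u|
        rw [hφd, show r - s - (r - u) = -(s - u) by ring, abs_neg]
    have := (hug _ _).2 γ _ hγ hseg t ht
    rw [this]
    rw [hdrr] at ht
    exact ⟨r - t, ⟨by linarith [ht.2, hr'.1], by linarith [ht.1, hr.2]⟩, rfl⟩

-- Hausdorff distance helpers

lemma dist_le_hd {A : Set X} (hAc : IsCompact A) (hAne : A.Nonempty) {x b : X} (hb : b ∈ A) :
    dist x b ≤ Metric.hausdorffDist ({x} : Set X) A := by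
  have fin : EMetric.hausdorffEdist A ({x} : Set X) ≠ ⊤ :=
    Metric.hausdorffEdist_ne_top_of_nonempty_of_bounded hAne (Set.singleton_nonempty x)
      hAc.isBounded Bornology.isBounded_singleton
  have h := Metric.infDist_le_hausdorffDist_of_mem hb fin
  rw [Metric.infDist_singleton] at h
  rw [Metric.hausdorffDist_comm] at h
  rw [dist_comm]
  exact h

lemma hd_singleton_le {x : X} {A : Set X} (hAne : A.Nonempty) {r : ℝ} (hr : 0 ≤ r)
    (h : ∀ a ∈ A, dist x a ≤ r) : Metric.hausdorffDist ({x} : Set X) A ≤ r := by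
  apply Metric.hausdorffDist_le_of_mem_dist hr
  · rintro y rfl
    obtain ⟨a, ha⟩ := hAne
    exact ⟨a, ha, h a ha⟩
  · intro a ha
    exact ⟨x, rfl, by rw [dist_comm]; exact h a ha⟩

lemma hd_singleton_eq {x a₀ : X} {A : Set X} (hAc : IsCompact A) (hAne : A.Nonempty)
    (ha₀ : a₀ ∈ A) (hmax : ∀ a ∈ A, dist x a ≤ dist x a₀) :
    Metric.hausdorffDist ({x} : Set X) A = dist x a₀ :=
  le_antisymm (hd_singleton_le hAne dist_nonneg hmax) (dist_le_hd hAc hAne ha₀)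

lemma hd_singleton_singleton (u v : X) :
    Metric.hausdorffDist ({u} : Set X) ({v} : Set X) = dist u v :=
  hd_singleton_eq isCompact_singleton (Set.singleton_nonempty v) rfl
    (by rintro a rfl; exact le_rfl)

/-- Hausdorff distance from a singleton to a parametrized segment `φ '' [c,e]`,
when `t ≤ c ≤ e`: realized at the far endpoint. -/
lemma hd_singleton_seg {φ : ℝ → X} (hφ : Isometry φ) {t c e : ℝ} (htc : t ≤ c) (hce : c ≤ e) :
    Metric.hausdorffDist ({φ t} : Set X) (φ '' Set.Icc c e) = e - t := by
  have hφd : ∀ s u : ℝ, dist (φ s) (φ u) = |s - u| := by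
    intro s u; rw [hφ.dist_eq, Real.dist_eq]
  have he : φ e ∈ φ '' Set.Icc c e := ⟨e, ⟨hce, le_rfl⟩, rfl⟩
  have hmax : ∀ a ∈ φ '' Set.Icc c e, dist (φ t) a ≤ dist (φ t) (φ e) := by
    rintro a ⟨r, hr, rfl⟩
    rw [hφd, hφd, abs_of_nonpos (by linarith [hr.1] : t - r ≤ 0),
      abs_of_nonpos (by linarith : t - e ≤ 0)]
    linarith [hr.2]
  have := hd_singleton_eq (isCompact_Icc.image hφ.continuous) ⟨φ e, he⟩ he hmax
  rw [this, hφd, abs_of_nonpos (by linarith)]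
  ring

/-- **Dichotomy**: if the Hausdorff distance between `A` and `C` is realized additively
through a singleton `{x}`, with both parts positive, then `A` or `C` is a singleton. -/
lemma dichotomy (hug : IsUniquelyGeodesic X) (hgc : IsGeodesicallyComplete X)
    (hns : GeodesicsDoNotSplit X) {x : X} {A C : Set X}
    (hAc : IsCompact A) (hAne : A.Nonempty) (hCc : IsCompact C) (hCne : C.Nonempty)
    (hα : 0 < Metric.hausdorffDist A {x}) (hβ : 0 < Metric.hausdorffDist ({x} : Set X) C)
    (hsum : Metric.hausdorffDist A C
      = Metric.hausdorffDist A {x} + Metric.hausdorffDist ({x} : Set X) C) :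
    (∃ a, A = {a}) ∨ (∃ c, C = {c}) := by
  set α := Metric.hausdorffDist A ({x} : Set X) with hαdef
  set β := Metric.hausdorffDist ({x} : Set X) C with hβdef
  have hA' : ∀ a ∈ A, dist x a ≤ α := by
    intro a ha
    have := dist_le_hd (x := x) hAc hAne ha
    rwa [Metric.hausdorffDist_comm] at this
  have hC' : ∀ c ∈ C, dist x c ≤ β := fun c hc => dist_le_hd (x := x) hCc hCne hc
  have fin : EMetric.hausdorffEdist A C ≠ ⊤ :=
    Metric.hausdorffEdist_ne_top_of_nonempty_of_bounded hAne hCne hAc.isBounded hCc.isBounded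
  obtain ⟨a₀, ha₀A, ha₀max⟩ := hAc.exists_isMaxOn hAne
    (Metric.continuous_infDist_pt C).continuousOn
  obtain ⟨c₀, hc₀C, hc₀max⟩ := hCc.exists_isMaxOn hCne
    (Metric.continuous_infDist_pt A).continuousOn
  rw [isMaxOn_iff] at ha₀max hc₀max
  have hcases : Metric.infDist a₀ C = α + β ∨ Metric.infDist c₀ A = α + β := by
    by_contra hcon
    push_neg at hcon
    have hb1 : Metric.infDist a₀ C ≤ α + β := by
      have := Metric.infDist_le_hausdorffDist_of_mem ha₀A fin
      rwa [hsum] at this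
    have hb2 : Metric.infDist c₀ A ≤ α + β := by
      have := Metric.infDist_le_hausdorffDist_of_mem hc₀C
        (by rw [hausdorffEDist_comm]; exact fin)
      rwa [Metric.hausdorffDist_comm, hsum] at this
    have h1 : Metric.infDist a₀ C < α + β := lt_of_le_of_ne hb1 hcon.1
    have h2 : Metric.infDist c₀ A < α + β := lt_of_le_of_ne hb2 hcon.2
    set r := max (Metric.infDist a₀ C) (Metric.infDist c₀ A) with hrdef
    have hr0 : 0 ≤ r := le_trans Metric.infDist_nonneg (le_max_left _ _)
    have hle : Metric.hausdorffDist A C ≤ r := by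
      apply Metric.hausdorffDist_le_of_mem_dist hr0
      · intro a ha
        obtain ⟨c, hc, hdc⟩ := hCc.exists_infDist_eq_dist hCne a
        exact ⟨c, hc, by rw [← hdc]; exact le_trans (ha₀max a ha) (le_max_left _ _)⟩
      · intro c hc
        obtain ⟨a, ha, hda⟩ := hAc.exists_infDist_eq_dist hAne c
        exact ⟨a, ha, by rw [← hda]; exact le_trans (hc₀max c hc) (le_max_right _ _)⟩
    have : Metric.hausdorffDist A C < α + β := lt_of_le_of_lt hle (max_lt h1 h2)
    rw [hsum] at this
    exact lt_irrefl _ this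
  rcases hcases with hkey | hkey
  · -- every c ∈ C is pinned ⇒ C is a singleton
    right
    have key : ∀ c ∈ C, dist x c = β ∧ dist a₀ x + dist x c = dist a₀ c ∧ dist a₀ x = α := by
      intro c hc
      have h1 : α + β ≤ dist a₀ c := hkey ▸ Metric.infDist_le_dist_of_mem hc
      have h2 : dist a₀ c ≤ dist a₀ x + dist x c := dist_triangle _ _ _
      have h3 : dist a₀ x ≤ α := by rw [dist_comm]; exact hA' a₀ ha₀A
      have h4 : dist x c ≤ β := hC' c hc
      refine ⟨by linarith, by linarith, by linarith⟩
    obtain ⟨c₁, hc₁⟩ := hCne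
    refine ⟨c₁, Set.eq_singleton_iff_unique_mem.2 ⟨hc₁, fun c hc => ?_⟩⟩
    obtain ⟨k1, k2, k3⟩ := key c hc
    obtain ⟨m1, m2, m3⟩ := key c₁ hc₁
    have hax : a₀ ≠ x := by
      intro hh
      rw [hh, dist_self] at k3
      linarith
    exact lineP hug hgc hns hax k2 m2 (by rw [k1, m1])
  · -- every a ∈ A is pinned ⇒ A is a singleton
    left
    have key : ∀ a ∈ A, dist x a = α ∧ dist c₀ x + dist x a = dist c₀ a ∧ dist c₀ x = β := by
      intro a ha
      have h1 : α + β ≤ dist c₀ a := hkey ▸ Metric.infDist_le_dist_of_mem ha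
      have h2 : dist c₀ a ≤ dist c₀ x + dist x a := dist_triangle _ _ _
      have h3 : dist c₀ x ≤ β := by rw [dist_comm]; exact hC' c₀ hc₀C
      have h4 : dist x a ≤ α := hA' a ha
      refine ⟨by linarith, by linarith, by linarith⟩
    obtain ⟨a₁, ha₁⟩ := hAne
    refine ⟨a₁, Set.eq_singleton_iff_unique_mem.2 ⟨ha₁, fun a ha => ?_⟩⟩
    obtain ⟨k1, k2, k3⟩ := key a ha
    obtain ⟨m1, m2, m3⟩ := key a₁ ha₁
    have hcx : c₀ ≠ x := by
      intro hh
      rw [hh, dist_self] at k3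
      linarith
    exact lineP hug hgc hns hcx k2 m2 (by rw [k1, m1])

-- ConvexCompacts helpers

lemma distCC (A B : ConvexCompacts X) :
    dist A B = Metric.hausdorffDist ((A.1 : Set X)) ((B.1 : Set X)) := rfl

lemma singletonCC_coe (u : X) : (((singletonCC u).1 : Set X)) = {u} := rfl

lemma distCC_singleton (u v : X) : dist (singletonCC u) (singletonCC v) = dist u v := by
  rw [distCC, singletonCC_coe, singletonCC_coe, hd_singleton_singleton]

lemma CC_ext {A B : ConvexCompacts X} (h : ((A.1 : Set X)) = ((B.1 : Set X))) : A = B :=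
  Subtype.ext (NonemptyCompacts.ext h)

end Aux
/-- **Lemma 3.2.** If a surjective isometry of `𝒞(X,d)` maps some singleton to a
singleton, then it maps every singleton to a singleton. -/
theorem image_of_points_are_points_of_one [MetricSpace X]
    (hug : IsUniquelyGeodesic X) (hgc : IsGeodesicallyComplete X)
    (hns : GeodesicsDoNotSplit X)
    (I : ConvexCompacts X ≃ᵢ ConvexCompacts X)
    (h : ∃ p x : X, ((I (singletonCC p)).1 : Set X) = {x}) :
    ∀ q : X, ∃ x : X, ((I (singletonCC q)).1 : Set X) = {x} := by
  obtain ⟨p, x, hpx⟩ := h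
  intro q
  by_cases hqp : q = p
  · exact ⟨x, by rw [hqp]; exact hpx⟩
  have hd : 0 < dist p q := dist_pos.2 fun hh => hqp hh.symm
  obtain ⟨ψ, hψiso, hψ0, hψd⟩ := exists_line hug hgc p q
  set d := dist p q with hddef
  have hψ : ∀ s t : ℝ, dist (ψ s) (ψ t) = |s - t| := fun s t => by
    rw [hψiso.dist_eq, Real.dist_eq]
  have hIdist : ∀ u v : X, Metric.hausdorffDist ((I (singletonCC u)).1 : Set X)
      ((I (singletonCC v)).1 : Set X) = dist u v := by
    intro u v
    rw [← distCC, I.dist_eq, distCC_singleton]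
  have hdi1 : Metric.hausdorffDist ((I (singletonCC q)).1 : Set X) ({x} : Set X) = d := by
    rw [← hpx, hIdist, dist_comm, hddef]
  -- first dichotomy : through {x}, partner at ψ (-1)
  have hdi2 : Metric.hausdorffDist ({x} : Set X) ((I (singletonCC (ψ (-1)))).1 : Set X) = 1 := by
    rw [← hpx, hIdist, ← hψ0, hψ, abs_of_nonneg (by norm_num)]
    norm_num
  have hdsum1 : Metric.hausdorffDist ((I (singletonCC q)).1 : Set X)
      ((I (singletonCC (ψ (-1)))).1 : Set X) = d + 1 := by
    rw [hIdist, ← hψd, hψ, abs_of_nonneg (by linarith)]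
    ring
  rcases dichotomy hug hgc hns (I (singletonCC q)).1.isCompact (I (singletonCC q)).1.nonempty
      (I (singletonCC (ψ (-1)))).1.isCompact (I (singletonCC (ψ (-1)))).1.nonempty
      (by rw [hdi1]; exact hd) (by rw [hdi2]; norm_num)
      (by rw [hdi1, hdi2, hdsum1]) with hBsing | ⟨c₁, hc₁⟩
  · exact hBsing
  -- second dichotomy : through {x}, partner at ψ (-3)
  have hdi2' : Metric.hausdorffDist ({x} : Set X) ((I (singletonCC (ψ (-3)))).1 : Set X) = 3 := by
    rw [← hpx, hIdist, ← hψ0, hψ, abs_of_nonneg (by norm_num)]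
    norm_num
  have hdsum1' : Metric.hausdorffDist ((I (singletonCC q)).1 : Set X)
      ((I (singletonCC (ψ (-3)))).1 : Set X) = d + 3 := by
    rw [hIdist, ← hψd, hψ, abs_of_nonneg (by linarith)]
    ring
  rcases dichotomy hug hgc hns (I (singletonCC q)).1.isCompact (I (singletonCC q)).1.nonempty
      (I (singletonCC (ψ (-3)))).1.isCompact (I (singletonCC (ψ (-3)))).1.nonempty
      (by rw [hdi1]; exact hd) (by rw [hdi2']; norm_num)
      (by rw [hdi1, hdi2', hdsum1']) with hBsing | ⟨c₃, hc₃⟩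
  · exact hBsing
  -- the target line through x and c₁
  have hxc₁ : dist x c₁ = 1 := by
    rw [← hd_singleton_singleton, ← hc₁]
    exact hdi2
  obtain ⟨φ, hφiso, hφ0, hφ1'⟩ := exists_line hug hgc x c₁
  rw [hxc₁] at hφ1'
  have hφ1 : φ 1 = c₁ := hφ1'
  have hφ : ∀ s t : ℝ, dist (φ s) (φ t) = |s - t| := fun s t => by
    rw [hφiso.dist_eq, Real.dist_eq]
  -- the segment W = φ '' [2,3] as an element of 𝒞(X)
  set Wcc : ConvexCompacts X := ⟨⟨⟨φ '' Set.Icc 2 3, isCompact_Icc.image hφiso.continuous⟩,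
    ⟨φ 2, ⟨2, ⟨le_rfl, by norm_num⟩, rfl⟩⟩⟩, seg_convex hug hφiso 2 3⟩ with hWdef
  have hWcoe : ((Wcc.1 : Set X)) = φ '' Set.Icc 2 3 := rfl
  -- third dichotomy, in the "domain", through {ψ (-1)}
  have h2a : Metric.hausdorffDist (((I.symm (singletonCC (φ (-(d+1))))).1 : Set X))
      ({ψ (-1)} : Set X) = d + 2 := by
    rw [← singletonCC_coe (ψ (-1)), ← distCC,
      show (singletonCC (ψ (-1))) = I.symm (I (singletonCC (ψ (-1)))) from
        (I.symm_apply_apply _).symm,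
      I.symm.dist_eq, distCC, singletonCC_coe, hc₁, hd_singleton_singleton, ← hφ1, hφ,
      abs_of_nonpos (by linarith)]
    ring
  have h2b : Metric.hausdorffDist ({ψ (-1)} : Set X) (((I.symm Wcc).1 : Set X)) = 2 := by
    rw [← singletonCC_coe (ψ (-1)), ← distCC,
      show (singletonCC (ψ (-1))) = I.symm (I (singletonCC (ψ (-1)))) from
        (I.symm_apply_apply _).symm,
      I.symm.dist_eq, distCC, hc₁, hWcoe, ← hφ1,
      hd_singleton_seg hφiso (by norm_num) (by norm_num)]
    norm_num
  have h2c : Metric.hausdorffDist (((I.symm (singletonCC (φ (-(d+1))))).1 : Set X))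
      (((I.symm Wcc).1 : Set X)) = (d + 2) + 2 := by
    rw [← distCC, I.symm.dist_eq, distCC, singletonCC_coe, hWcoe,
      hd_singleton_seg hφiso (by linarith) (by norm_num)]
    ring
  rcases dichotomy hug hgc hns (I.symm (singletonCC (φ (-(d+1))))).1.isCompact
      (I.symm (singletonCC (φ (-(d+1))))).1.nonempty
      (I.symm Wcc).1.isCompact (I.symm Wcc).1.nonempty
      (by rw [h2a]; linarith) (by rw [h2b]; norm_num)
      (by rw [h2a, h2b, h2c]) with ⟨z', hz'⟩ | ⟨z, hz⟩
  · -- A_u is a singleton {z'} : then z' = ψ (d+1) and we can pin down B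
    have hAu : I.symm (singletonCC (φ (-(d+1)))) = singletonCC z' :=
      CC_ext (hz'.trans (singletonCC_coe z').symm)
    have hIz' : I (singletonCC z') = singletonCC (φ (-(d+1))) := by
      rw [← hAu, I.apply_symm_apply]
    have hz'_p : dist p z' = d + 1 := by
      rw [← distCC_singleton, ← I.dist_eq, hIz', distCC, hpx, singletonCC_coe,
        hd_singleton_singleton, ← hφ0, hφ, abs_of_nonneg (by linarith)]
      ring
    have hz'_1 : dist (ψ (-1)) z' = d + 2 := by
      rw [← distCC_singleton, ← I.dist_eq, hIz', distCC, hc₁, singletonCC_coe,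
        hd_singleton_singleton, ← hφ1, hφ, abs_of_nonneg (by linarith)]
      ring
    have hp1 : dist p (ψ (-1)) = 1 := by
      rw [← hψ0, hψ, abs_of_nonneg (by norm_num)]
      norm_num
    have hne1 : ψ (-1) ≠ p := by
      intro hh
      rw [hh, dist_self] at hp1
      norm_num at hp1
    have hzz : z' = ψ (d + 1) := by
      apply lineP hug hgc hns hne1
      · rw [dist_comm (ψ (-1)) p, hp1, hz'_p, hz'_1]
        ring
      · rw [dist_comm (ψ (-1)) p, hp1, ← hψ0, hψ, hψ, abs_of_nonpos (by linarith),
          abs_of_nonpos (by linarith)]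
        ring
      · rw [hz'_p, ← hψ0, hψ, abs_of_nonpos (by linarith)]
        ring
    rw [hzz] at hIz'
    -- now every point of B is pinned
    have hfact : ∀ b ∈ ((I (singletonCC q)).1 : Set X),
        dist x b + dist b (φ (-(d+1))) = dist x (φ (-(d+1))) ∧ dist x b = d := by
      intro b hb
      have hub1 : dist x b ≤ d := by
        have hh := dist_le_hd (I (singletonCC q)).1.isCompact (I (singletonCC q)).1.nonempty hb
          (x := x)
        rwa [Metric.hausdorffDist_comm, hdi1] at hh
      have he : Metric.hausdorffDist ({φ (-(d+1))} : Set X) ((I (singletonCC q)).1 : Set X)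
          = 1 := by
        rw [← singletonCC_coe, ← distCC, ← hIz', I.dist_eq, distCC_singleton,
          ← hψd, hψ, abs_of_nonneg (by linarith)]
        ring
      have hub2 : dist (φ (-(d+1))) b ≤ 1 := by
        have hh := dist_le_hd (I (singletonCC q)).1.isCompact (I (singletonCC q)).1.nonempty hb
          (x := φ (-(d+1)))
        rwa [he] at hh
      have hxw : dist x (φ (-(d+1))) = d + 1 := by
        rw [← hφ0, hφ, abs_of_nonneg (by linarith)]
        ring
      have h3 := dist_triangle x b (φ (-(d+1)))
      rw [hxw] at h3
      have hcb : dist b (φ (-(d+1))) ≤ 1 := by rw [dist_comm]; exact hub2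
      have he1 : dist x b = d := le_antisymm hub1 (by linarith)
      have he2 : dist b (φ (-(d+1))) = 1 := le_antisymm hcb (by linarith)
      exact ⟨by rw [he1, he2, hxw], he1⟩
    obtain ⟨b₀, hb₀⟩ := (I (singletonCC q)).1.nonempty
    refine ⟨b₀, Set.eq_singleton_iff_unique_mem.2 ⟨hb₀, fun b hb => ?_⟩⟩
    obtain ⟨k1, k2⟩ := hfact b hb
    obtain ⟨m1, m2⟩ := hfact b₀ hb₀
    exact between_unique hug k1 m1 (by rw [k2, m2])
  · -- Q is a singleton {z} : contradiction, since then I {ψ (-3)} = W is not a singleton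
    exfalso
    have hQ : I.symm Wcc = singletonCC z := CC_ext (hz.trans (singletonCC_coe z).symm)
    have hIW : Wcc = I (singletonCC z) := by rw [← hQ, I.apply_symm_apply]
    have hz_p : dist p z = 3 := by
      rw [← distCC_singleton, ← I.dist_eq, ← hIW, distCC, hpx, hWcoe, ← hφ0,
        hd_singleton_seg hφiso (by norm_num) (by norm_num)]
      norm_num
    have hz_1 : dist (ψ (-1)) z = 2 := by
      rw [← distCC_singleton, ← I.dist_eq, ← hIW, distCC, hc₁, hWcoe, ← hφ1,
        hd_singleton_seg hφiso (by norm_num) (by norm_num)]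
      norm_num
    have hp1 : dist p (ψ (-1)) = 1 := by
      rw [← hψ0, hψ, abs_of_nonneg (by norm_num)]
      norm_num
    have hne1 : p ≠ ψ (-1) := by
      intro hh
      rw [← hh, dist_self] at hp1
      norm_num at hp1
    have hzz : z = ψ (-3) := by
      apply lineP hug hgc hns hne1
      · rw [hp1, hz_1, hz_p]
        norm_num
      · rw [hp1, ← hψ0, hψ, hψ, abs_of_nonneg (by norm_num : (0:ℝ) ≤ -1 - -3),
          abs_of_nonneg (by norm_num : (0:ℝ) ≤ 0 - -3)]
        norm_num
      · rw [hz_1, hψ, abs_of_nonneg (by norm_num : (0:ℝ) ≤ -1 - -3)]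
        norm_num
    rw [hzz] at hIW
    have hWc : ((Wcc.1 : Set X)) = {c₃} := by rw [hIW]; exact hc₃
    have h2m : φ 2 = c₃ := by
      have hm : φ 2 ∈ ((Wcc.1 : Set X)) := by
        rw [hWcoe]; exact ⟨2, ⟨le_rfl, by norm_num⟩, rfl⟩
      rw [hWc] at hm
      exact hm
    have h3m : φ 3 = c₃ := by
      have hm : φ 3 ∈ ((Wcc.1 : Set X)) := by
        rw [hWcoe]; exact ⟨3, ⟨by norm_num, le_rfl⟩, rfl⟩
      rw [hWc] at hm
      exact hm
    have := hφ 2 3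
    rw [h2m, h3m, dist_self] at this
    norm_num at this
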